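/- Let R be a regular set of sequences and let (u_ε)_{ε∈(0,1]} be a net of Schwartz functions on ℝ^d for which there exists N ∈ R with μ_{q,l}(u_ε) = O(ε^{-N(l)}) as ε→0 for all (q,l) ∈ ℕ² (a bound depending only on the derivative index l). Then there exists N' ∈ R such that μ_{q,l}(û_ε) = O(ε^{-N'(q)}) as ε→0 for all (q,l) ∈ ℕ² (a bound depending only on the weight index q). -/

import Mathlib

open Set MeasureTheory

/-- A regular set of sequences `N : ℕ → [0,∞)`. -/
def IsRegularSeq (R : Set (ℕ → ℝ)) : Prop :=
  R.Nonempty ∧ (∀ N ∈ R, ∀ n : ℕ, 0 ≤ N n) ∧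
  (∀ N ∈ R, ∀ k k' : ℕ, ∃ N' ∈ R, ∀ n : ℕ, N (n + k) + (k' : ℝ) ≤ N' n) ∧
  (∀ N₁ ∈ R, ∀ N₂ ∈ R, ∃ N₃ ∈ R, ∀ n : ℕ, max (N₁ n) (N₂ n) ≤ N₃ n) ∧
  (∀ N₁ ∈ R, ∀ N₂ ∈ R, ∃ N₃ ∈ R, ∀ l₁ l₂ : ℕ, N₁ l₁ + N₂ l₂ ≤ N₃ (l₁ + l₂))

/-- The Fourier transform `û(ξ) = ∫ e^{-i x·ξ} u(x) dx` on `ℝ^d`. -/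
noncomputable def ftransform (d : ℕ) (u : EuclideanSpace ℝ (Fin d) → ℂ) :
    EuclideanSpace ℝ (Fin d) → ℂ :=
  fun ξ => ∫ x, Complex.exp (-(Complex.I * ((inner ℝ x ξ : ℝ) : ℂ))) * u x

open Real
open scoped FourierTransform

lemma ftransform_eq_fourierIntegral (d : ℕ) (f : EuclideanSpace ℝ (Fin d) → ℂ)
    (ξ : EuclideanSpace ℝ (Fin d)) :
    ftransform d f ξ = 𝓕 f ((2 * π)⁻¹ • ξ) := by
  rw [Real.fourier_eq]
  unfold ftransform
  congr 1 with x
  rw [Circle.smul_def, Real.fourierChar_apply, real_inner_smul_right, smul_eq_mul]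
  congr 1
  have hπ : (2 * π) ≠ 0 := by positivity
  rw [show (2 * π * -((2 * π)⁻¹ * (inner ℝ x ξ : ℝ))) = -(inner ℝ x ξ : ℝ) by field_simp]
  push_cast
  ring

lemma norm_iteratedFDeriv_ftransform_le (d : ℕ)
    (f : SchwartzMap (EuclideanSpace ℝ (Fin d)) ℂ) (n : ℕ) (ξ : EuclideanSpace ℝ (Fin d)) :
    ‖iteratedFDeriv ℝ n (ftransform d ⇑f) ξ‖
      ≤ ‖iteratedFDeriv ℝ n (𝓕 ⇑f) ((2 * π)⁻¹ • ξ)‖ := by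
  have hF : ContDiff ℝ ((⊤ : ℕ∞) : WithTop ℕ∞) (𝓕 ⇑f) :=
    Real.contDiff_fourier (N := ⊤) (fun n _ => f.integrable_pow_mul volume n)
  set L : EuclideanSpace ℝ (Fin d) →L[ℝ] EuclideanSpace ℝ (Fin d) :=
    (2 * π)⁻¹ • ContinuousLinearMap.id ℝ (EuclideanSpace ℝ (Fin d)) with hL
  have hLapp : ∀ x, L x = (2 * π)⁻¹ • x := fun x => rfl
  have hcomp : ftransform d ⇑f = (𝓕 ⇑f) ∘ L := by
    funext y
    rw [Function.comp_apply, hLapp, ftransform_eq_fourierIntegral]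
  rw [hcomp, ContinuousLinearMap.iteratedFDeriv_comp_right L hF ξ (mod_cast le_top), hLapp]
  have hLnorm : ‖L‖ ≤ 1 := by
    have h1 : ‖L‖ ≤ ‖(2 * π)⁻¹‖ * ‖ContinuousLinearMap.id ℝ (EuclideanSpace ℝ (Fin d))‖ := by
      rw [hL]
      exact norm_smul_le ((2 * π)⁻¹) (ContinuousLinearMap.id ℝ (EuclideanSpace ℝ (Fin d)))
    have h2 : ‖ContinuousLinearMap.id ℝ (EuclideanSpace ℝ (Fin d))‖ ≤ 1 :=
      ContinuousLinearMap.norm_id_le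
    have h3 : ‖(2 * π)⁻¹‖ ≤ 1 := by
      rw [Real.norm_eq_abs, abs_of_nonneg (by positivity), inv_le_one_iff₀]
      right
      nlinarith [Real.pi_gt_three]
    nlinarith [norm_nonneg ((2*π)⁻¹),
      norm_nonneg (ContinuousLinearMap.id ℝ (EuclideanSpace ℝ (Fin d)))]
  apply (ContinuousMultilinearMap.norm_compContinuousLinearMap_le _ _).trans
  have hp : ∏ _i : Fin n, ‖L‖ ≤ 1 :=
    Finset.prod_le_one (fun _ _ => norm_nonneg _) (fun _ _ => hLnorm)
  calc ‖iteratedFDeriv ℝ n (𝓕 ⇑f) ((2 * π)⁻¹ • ξ)‖ * ∏ _i : Fin n, ‖L‖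
      ≤ ‖iteratedFDeriv ℝ n (𝓕 ⇑f) ((2 * π)⁻¹ • ξ)‖ * 1 :=
        mul_le_mul_of_nonneg_left hp (norm_nonneg _)
    _ = _ := mul_one _

lemma one_add_pow_le (x : ℝ) (hx : 0 ≤ x) (q : ℕ) : (1 + x) ^ q ≤ 2 ^ q * (1 + x ^ q) := by
  rcases le_total x 1 with h | h
  · calc (1 + x) ^ q ≤ 2 ^ q := pow_le_pow_left₀ (by linarith) (by linarith) q
      _ ≤ 2 ^ q * (1 + x ^ q) :=
        le_mul_of_one_le_right (by positivity) (by nlinarith [pow_nonneg hx q])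
  · calc (1 + x) ^ q ≤ (2 * x) ^ q := pow_le_pow_left₀ (by linarith) (by linarith) q
      _ = 2 ^ q * x ^ q := mul_pow 2 x q
      _ ≤ 2 ^ q * (1 + x ^ q) := by gcongr; linarith

/-- Exchange theorem, one direction: moderate bounds depending only on the derivative
index `l` are transformed by the Fourier transform into moderate bounds depending only
on the weight index `q`. -/
theorem stmt10 (d : ℕ) (R : Set (ℕ → ℝ)) (hR : IsRegularSeq R)
    (u : ℝ → SchwartzMap (EuclideanSpace ℝ (Fin d)) ℂ)
    (hu : ∃ N ∈ R, ∀ q l : ℕ, ∃ C > (0:ℝ), ∃ ε₀ ∈ Ioc (0:ℝ) 1, ∀ ε ∈ Ioo (0:ℝ) ε₀,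
      ∀ x, ∀ n ≤ l, (1 + ‖x‖) ^ q * ‖iteratedFDeriv ℝ n (⇑(u ε)) x‖ ≤ C * ε ^ (-(N l))) :
    ∃ N' ∈ R, ∀ q l : ℕ, ∃ C > (0:ℝ), ∃ ε₀ ∈ Ioc (0:ℝ) 1, ∀ ε ∈ Ioo (0:ℝ) ε₀,
      ∀ ξ, ∀ n ≤ l,
        (1 + ‖ξ‖) ^ q * ‖iteratedFDeriv ℝ n (ftransform d (⇑(u ε))) ξ‖
          ≤ C * ε ^ (-(N' q)) := by
  obtain ⟨N, hNR, hbound⟩ := hu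
  refine ⟨N, hNR, ?_⟩
  intro q l
  obtain ⟨C, hC, ε₀, hε₀, hb⟩ := hbound (l + d + 1) q
  have hfin : ((Module.finrank ℝ (EuclideanSpace ℝ (Fin d))) : ℝ) < (d + 1 : ℝ) := by
    rw [finrank_euclideanSpace_fin]
    norm_num
  have hI_int : Integrable (fun v : EuclideanSpace ℝ (Fin d) => (1 + ‖v‖) ^ (-(d + 1 : ℝ))) :=
    integrable_one_add_norm hfin
  set I := ∫ v : EuclideanSpace ℝ (Fin d), (1 + ‖v‖) ^ (-(d + 1 : ℝ)) with hIdef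
  have hI0 : 0 ≤ I := integral_nonneg (fun v => Real.rpow_nonneg (by positivity) _)
  have h2π : (1:ℝ) ≤ 2 * π := by nlinarith [Real.pi_gt_three]
  have hIpos : (0:ℝ) < I + 1 := by linarith
  refine ⟨(2 * π) ^ q * 2 ^ q * 2 *
      ((2 * π) ^ l * (2 * (l:ℝ) + 2) ^ q * (((l:ℝ) + 1) * ((q:ℝ) + 1)) * (C * (I + 1))),
    by positivity, ε₀, hε₀, ?_⟩
  intro ε hε ξ n hn
  have hε0 : 0 < ε := hε.1
  have hT0 : 0 ≤ C * ε ^ (-(N q)) := mul_nonneg hC.le (Real.rpow_nonneg hε0.le _)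
  set w := (2 * π)⁻¹ • ξ with hw
  set A := ‖iteratedFDeriv ℝ n (𝓕 ⇑(u ε)) w‖ with hA
  have hA0 : 0 ≤ A := norm_nonneg _
  -- bound on the moment integrals of u ε
  have hint : ∀ a b : ℕ, a ≤ l → b ≤ q →
      (∫ v, ‖v‖ ^ a * ‖iteratedFDeriv ℝ b (⇑(u ε)) v‖) ≤ C * ε ^ (-(N q)) * (I + 1) := by
    intro a b ha hbq
    have hpt : ∀ v : EuclideanSpace ℝ (Fin d), ‖v‖ ^ a * ‖iteratedFDeriv ℝ b (⇑(u ε)) v‖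
        ≤ C * ε ^ (-(N q)) * (1 + ‖v‖) ^ (-(d + 1 : ℝ)) := by
      intro v
      have h1 : (0:ℝ) < 1 + ‖v‖ := by positivity
      have hkey := hb ε hε v b hbq
      have h2 : ‖v‖ ^ a ≤ (1 + ‖v‖) ^ (l + d + 1) * (1 + ‖v‖) ^ (-(d + 1 : ℝ)) := by
        have e : (1 + ‖v‖) ^ (l + d + 1) * (1 + ‖v‖) ^ (-(d + 1 : ℝ))
            = (1 + ‖v‖) ^ (l : ℕ) := by
          rw [← Real.rpow_natCast (1 + ‖v‖) (l + d + 1), ← Real.rpow_add h1,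
            ← Real.rpow_natCast (1 + ‖v‖) l]
          congr 1
          push_cast
          ring
        rw [e]
        calc ‖v‖ ^ a ≤ (1 + ‖v‖) ^ a := pow_le_pow_left₀ (norm_nonneg _) (by linarith [norm_nonneg v]) a
          _ ≤ (1 + ‖v‖) ^ l := pow_le_pow_right₀ (by linarith [norm_nonneg v]) ha
      calc ‖v‖ ^ a * ‖iteratedFDeriv ℝ b (⇑(u ε)) v‖
          ≤ ((1 + ‖v‖) ^ (l + d + 1) * (1 + ‖v‖) ^ (-(d + 1 : ℝ)))
              * ‖iteratedFDeriv ℝ b (⇑(u ε)) v‖ :=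
            mul_le_mul_of_nonneg_right h2 (norm_nonneg _)
        _ = ((1 + ‖v‖) ^ (l + d + 1) * ‖iteratedFDeriv ℝ b (⇑(u ε)) v‖)
              * (1 + ‖v‖) ^ (-(d + 1 : ℝ)) := by ring
        _ ≤ (C * ε ^ (-(N q))) * (1 + ‖v‖) ^ (-(d + 1 : ℝ)) :=
            mul_le_mul_of_nonneg_right hkey (Real.rpow_nonneg h1.le _)
    calc (∫ v, ‖v‖ ^ a * ‖iteratedFDeriv ℝ b (⇑(u ε)) v‖)
        ≤ ∫ v : EuclideanSpace ℝ (Fin d),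
            C * ε ^ (-(N q)) * (1 + ‖v‖) ^ (-(d + 1 : ℝ)) :=
          integral_mono ((u ε).integrable_pow_mul_iteratedFDeriv volume a b)
            (hI_int.const_mul _) hpt
      _ = C * ε ^ (-(N q)) * I := by rw [integral_const_mul]
      _ ≤ C * ε ^ (-(N q)) * (I + 1) := by nlinarith
  -- key bound on weighted derivatives of the Fourier transform
  have hkeym : ∀ m : ℕ, m ≤ q → ‖w‖ ^ m * A ≤
      (2 * π) ^ l * (2 * (l:ℝ) + 2) ^ q * (((l:ℝ) + 1) * ((q:ℝ) + 1))
        * (C * ε ^ (-(N q)) * (I + 1)) := by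
    intro m hm
    have hK := Real.pow_mul_norm_iteratedFDeriv_fourier_le (K := (⊤:ℕ∞)) (N := (⊤:ℕ∞))
      ((u ε).smooth ⊤) (fun k n _ _ => (u ε).integrable_pow_mul_iteratedFDeriv volume k n)
      (k := n) (n := m) le_top le_top w
    apply hK.trans
    have hS0 : (0:ℝ) ≤ ∑ p ∈ Finset.range (n+1) ×ˢ Finset.range (m+1),
        ∫ v, ‖v‖ ^ p.1 * ‖iteratedFDeriv ℝ p.2 (⇑(u ε)) v‖ :=
      Finset.sum_nonneg fun p _ => integral_nonneg fun v => by positivity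
    have hsum : ∑ p ∈ Finset.range (n+1) ×ˢ Finset.range (m+1),
        ∫ v, ‖v‖ ^ p.1 * ‖iteratedFDeriv ℝ p.2 (⇑(u ε)) v‖
        ≤ (((n:ℝ)+1) * ((m:ℝ)+1)) * (C * ε ^ (-(N q)) * (I + 1)) := by
      calc ∑ p ∈ Finset.range (n+1) ×ˢ Finset.range (m+1),
            ∫ v, ‖v‖ ^ p.1 * ‖iteratedFDeriv ℝ p.2 (⇑(u ε)) v‖
          ≤ (Finset.range (n+1) ×ˢ Finset.range (m+1)).card
              • (C * ε ^ (-(N q)) * (I + 1)) := by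
            apply Finset.sum_le_card_nsmul
            intro p hp
            simp only [Finset.mem_product, Finset.mem_range] at hp
            exact hint p.1 p.2 (by omega) (by omega)
        _ = (((n:ℝ)+1) * ((m:ℝ)+1)) * (C * ε ^ (-(N q)) * (I + 1)) := by
            rw [nsmul_eq_mul, Finset.card_product, Finset.card_range, Finset.card_range]
            push_cast
            ring
    have e1 : ((2:ℝ) * π) ^ n ≤ (2*π) ^ l := pow_le_pow_right₀ h2π hn
    have e2 : ((2:ℝ) * n + 2) ^ m ≤ (2 * (l:ℝ) + 2) ^ q := by
      have hnl : ((n:ℝ)) ≤ (l:ℝ) := Nat.cast_le.2 hn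
      calc ((2:ℝ)*n+2)^m ≤ (2*(l:ℝ)+2)^m := pow_le_pow_left₀ (by positivity) (by linarith) m
        _ ≤ (2*(l:ℝ)+2)^q := pow_le_pow_right₀ (by have := Nat.cast_nonneg (α := ℝ) l; linarith) hm
    calc (2 * π) ^ n * (2 * (n:ℝ) + 2) ^ m * ∑ p ∈ Finset.range (n+1) ×ˢ Finset.range (m+1),
          ∫ v, ‖v‖ ^ p.1 * ‖iteratedFDeriv ℝ p.2 (⇑(u ε)) v‖
        ≤ (2 * π) ^ l * (2 * (l:ℝ) + 2) ^ q *
            ((((n:ℝ)+1) * ((m:ℝ)+1)) * (C * ε ^ (-(N q)) * (I + 1))) := by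
          apply mul_le_mul _ hsum hS0 (by positivity)
          exact mul_le_mul e1 e2 (by positivity) (by positivity)
      _ ≤ (2 * π) ^ l * (2 * (l:ℝ) + 2) ^ q *
            ((((l:ℝ)+1) * ((q:ℝ)+1)) * (C * ε ^ (-(N q)) * (I + 1))) := by
          have hnl : ((n:ℝ)) ≤ (l:ℝ) := Nat.cast_le.2 hn
          have hmq : ((m:ℝ)) ≤ (q:ℝ) := Nat.cast_le.2 hm
          have hc : (0:ℝ) ≤ C * ε ^ (-(N q)) * (I + 1) := mul_nonneg hT0 hIpos.le
          gcongr
      _ = (2 * π) ^ l * (2 * (l:ℝ) + 2) ^ q * (((l:ℝ) + 1) * ((q:ℝ) + 1))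
            * (C * ε ^ (-(N q)) * (I + 1)) := by ring
  -- assemble
  have h1 : ‖iteratedFDeriv ℝ n (ftransform d ⇑(u ε)) ξ‖ ≤ A :=
    norm_iteratedFDeriv_ftransform_le d (u ε) n ξ
  have hξw : 1 + ‖ξ‖ ≤ (2*π) * (1 + ‖w‖) := by
    have hwn : ‖w‖ = (2*π)⁻¹ * ‖ξ‖ := by
      rw [hw, norm_smul, Real.norm_eq_abs, abs_of_nonneg (by positivity)]
    have hπ : (0:ℝ) < 2*π := by positivity
    have he : (2*π) * (1+‖w‖) = 2*π + ‖ξ‖ := by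
      rw [hwn]
      field_simp
    rw [he]
    linarith
  calc (1 + ‖ξ‖) ^ q * ‖iteratedFDeriv ℝ n (ftransform d (⇑(u ε))) ξ‖
      ≤ (1 + ‖ξ‖) ^ q * A := mul_le_mul_of_nonneg_left h1 (by positivity)
    _ ≤ ((2*π) * (1 + ‖w‖)) ^ q * A :=
        mul_le_mul_of_nonneg_right (pow_le_pow_left₀ (by positivity) hξw q) hA0
    _ = (2*π)^q * ((1 + ‖w‖)^q * A) := by rw [mul_pow]; ring
    _ ≤ (2*π)^q * ((2^q * (1 + ‖w‖^q)) * A) :=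
        mul_le_mul_of_nonneg_left
          (mul_le_mul_of_nonneg_right (one_add_pow_le ‖w‖ (norm_nonneg _) q) hA0)
          (by positivity)
    _ = (2*π)^q * 2^q * (‖w‖^0 * A + ‖w‖^q * A) := by
        rw [pow_zero]
        ring
    _ ≤ (2*π)^q * 2^q *
          (((2 * π) ^ l * (2 * (l:ℝ) + 2) ^ q * (((l:ℝ) + 1) * ((q:ℝ) + 1))
            * (C * ε ^ (-(N q)) * (I + 1))) +
           ((2 * π) ^ l * (2 * (l:ℝ) + 2) ^ q * (((l:ℝ) + 1) * ((q:ℝ) + 1))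
            * (C * ε ^ (-(N q)) * (I + 1)))) :=
        mul_le_mul_of_nonneg_left (add_le_add (hkeym 0 (Nat.zero_le q)) (hkeym q le_rfl))
          (by positivity)
    _ = (2 * π) ^ q * 2 ^ q * 2 *
          ((2 * π) ^ l * (2 * (l:ℝ) + 2) ^ q * (((l:ℝ) + 1) * ((q:ℝ) + 1)) * (C * (I + 1)))
          * ε ^ (-(N q)) := by ring
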